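/- arXiv:2304.11338 — 3 statements merged into one kernel-verified Lean document; each statement's English description precedes it below -/
import Mathlib

section
/- (i) If ᾱ_ν(q,v,t) = α_ν(q,v,t) for every ν = 1,…,k and every (q,v,t) ∈ ℝⁿ × ℝᵐ × ℝ, then E*(q,v,t) = E(q,v,t) for all (q,v,t). (ii) Conversely, if k = 1 and (∂L/∂u_{m+1})(q, û(q,v,t), t) ≠ 0 for all (q,v,t), then E* = E as functions on ℝⁿ × ℝᵐ × ℝ implies ᾱ₁(q,v,t) = α₁(q,v,t) for all (q,v,t). -/
open scoped BigOperators
noncomputable section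
namespace NH

/-- The phase point `(q, v, t)` with `q : ℝⁿ` (n = m+k) and independent velocities `v : ℝᵐ`. -/
abbrev Pt (m k : ℕ) : Type := (Fin (m+k) → ℝ) × (Fin m → ℝ) × ℝ

/-- The full phase point `(q, u, t)` with all velocities `u : ℝⁿ`. -/
abbrev PtL (m k : ℕ) : Type := (Fin (m+k) → ℝ) × (Fin (m+k) → ℝ) × ℝ

/-- Partial derivative of `f (q, w, t)` with respect to `q_i`. -/
def pq {n m' : ℕ} (f : (Fin n → ℝ) × (Fin m' → ℝ) × ℝ → ℝ) (i : Fin n)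
    (x : (Fin n → ℝ) × (Fin m' → ℝ) × ℝ) : ℝ :=
  fderiv ℝ f x (Pi.single i 1, 0, 0)

/-- Partial derivative of `f (q, w, t)` with respect to the velocity variable `w_j`. -/
def pv {n m' : ℕ} (f : (Fin n → ℝ) × (Fin m' → ℝ) × ℝ → ℝ) (j : Fin m')
    (x : (Fin n → ℝ) × (Fin m' → ℝ) × ℝ) : ℝ :=
  fderiv ℝ f x (0, Pi.single j 1, 0)

/-- Partial derivative of `f (q, w, t)` with respect to time `t`. -/
def pt {n m' : ℕ} (f : (Fin n → ℝ) × (Fin m' → ℝ) × ℝ → ℝ)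
    (x : (Fin n → ℝ) × (Fin m' → ℝ) × ℝ) : ℝ :=
  fderiv ℝ f x (0, 0, 1)

/-- Partial derivative of `U (q, t)` with respect to `q_i`. -/
def pUq {n : ℕ} (U : (Fin n → ℝ) × ℝ → ℝ) (i : Fin n) (x : (Fin n → ℝ) × ℝ) : ℝ :=
  fderiv ℝ U x (Pi.single i 1, 0)

/-- Partial derivative of `U (q, t)` with respect to `t`. -/
def pUt {n : ℕ} (U : (Fin n → ℝ) × ℝ → ℝ) (x : (Fin n → ℝ) × ℝ) : ℝ :=
  fderiv ℝ U x (0, 1)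

variable {m k : ℕ}

/-- `û(q,v,t) = (v₁,…,vₘ, α₁(q,v,t),…,α_k(q,v,t))`. -/
def uhat (α : Fin k → Pt m k → ℝ) (x : Pt m k) : Fin (m+k) → ℝ :=
  Fin.append x.2.1 (fun ν => α ν x)

/-- The full phase point `(q, û(q,v,t), t)` associated to `(q,v,t)`. -/
def Lpt (α : Fin k → Pt m k → ℝ) (x : Pt m k) : PtL m k :=
  (x.1, uhat α x, x.2.2)

/-- The restricted Lagrangian `L*(q,v,t) = L(q, û(q,v,t), t)`. -/
def Lstar (L : PtL m k → ℝ) (α : Fin k → Pt m k → ℝ) (x : Pt m k) : ℝ :=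
  L (Lpt α x)

/-- `ᾱ_ν(q,v,t) = ∑_r v_r ∂α_ν/∂v_r`. -/
def abar (α : Fin k → Pt m k → ℝ) (ν : Fin k) (x : Pt m k) : ℝ :=
  ∑ r : Fin m, x.2.1 r * pv (α ν) r x

/-- The restricted energy `E*(q,v,t) = ∑_r v_r ∂L*/∂v_r − L*`. -/
def Estar (L : PtL m k → ℝ) (α : Fin k → Pt m k → ℝ) (x : Pt m k) : ℝ :=
  ∑ r : Fin m, x.2.1 r * pv (Lstar L α) r x - Lstar L α x

/-- The energy `E(q,v,t) = ∑_i û_i (∂L/∂u_i)(q,û,t) − L*(q,v,t)`. -/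
def En (L : PtL m k → ℝ) (α : Fin k → Pt m k → ℝ) (x : Pt m k) : ℝ :=
  ∑ i : Fin (m+k), uhat α x i * pv L i (Lpt α x) - Lstar L α x

/-- `q̇_i(t)`. -/
def qdot {n : ℕ} (q : ℝ → Fin n → ℝ) (t : ℝ) (i : Fin n) : ℝ :=
  deriv (fun s => q s i) t

/-- The independent velocities `v(t) = (q̇₁,…,q̇ₘ)` along a curve. -/
def vel (m k : ℕ) (q : ℝ → Fin (m+k) → ℝ) (t : ℝ) (r : Fin m) : ℝ :=
  qdot q t (Fin.castAdd k r)

/-- The point `(q(t), v(t), t)` along a curve. -/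
def along (m k : ℕ) (q : ℝ → Fin (m+k) → ℝ) (t : ℝ) : Pt m k :=
  (q t, vel m k q t, t)

/-- The curve satisfies the nonholonomic constraints: `q̇_{m+ν} = α_ν(q, v, t)`. -/
def Constrained (α : Fin k → Pt m k → ℝ) (q : ℝ → Fin (m+k) → ℝ) : Prop :=
  ∀ (t : ℝ) (ν : Fin k), qdot q t (Fin.natAdd m ν) = α ν (along m k q t)

/-- The Voronec coefficients `B_rν(t)` along a constrained curve. -/
def Bco (α : Fin k → Pt m k → ℝ) (q : ℝ → Fin (m+k) → ℝ) (r : Fin m) (ν : Fin k) (t : ℝ) : ℝ :=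
  deriv (fun s => pv (α ν) r (along m k q s)) t
    - pq (α ν) (Fin.castAdd k r) (along m k q t)
    - ∑ μ : Fin k, pv (α μ) r (along m k q t) * pq (α ν) (Fin.natAdd m μ) (along m k q t)

/-- The Voronec equations of motion along a constrained curve. -/
def Voronec (L : PtL m k → ℝ) (α : Fin k → Pt m k → ℝ) (q : ℝ → Fin (m+k) → ℝ) : Prop :=
  ∀ (r : Fin m) (t : ℝ),
    deriv (fun s => pv (Lstar L α) r (along m k q s)) t
      - pq (Lstar L α) (Fin.castAdd k r) (along m k q t)
      - ∑ ν : Fin k, pq (Lstar L α) (Fin.natAdd m ν) (along m k q t) * pv (α ν) r (along m k q t)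
      - ∑ ν : Fin k, Bco α q r ν t * pv L (Fin.natAdd m ν) (Lpt α (along m k q t)) = 0

variable {m k : ℕ}

lemma diff_uhat (α : Fin k → Pt m k → ℝ) (hα : ∀ ν, ContDiff ℝ 2 (α ν)) :
    Differentiable ℝ (uhat α) := by
  rw [differentiable_pi]
  intro i
  refine Fin.addCases (fun r => ?_) (fun ν => ?_) i
  · have h : (fun x : Pt m k => uhat α x (Fin.castAdd k r)) = fun x => x.2.1 r := by
      funext x; simp [uhat, Fin.append_left]
    rw [h]; fun_prop
  · have h : (fun x : Pt m k => uhat α x (Fin.natAdd m ν)) = fun x => α ν x := by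
      funext x; simp [uhat, Fin.append_right]
    rw [h]
    exact (hα ν).differentiable (by norm_num)

lemma diff_Lpt (α : Fin k → Pt m k → ℝ) (hα : ∀ ν, ContDiff ℝ 2 (α ν)) :
    Differentiable ℝ (Lpt α) := by
  have h := diff_uhat α hα
  exact differentiable_fst.prodMk (h.prodMk (differentiable_snd.snd))

lemma fderiv_Lpt (α : Fin k → Pt m k → ℝ) (hα : ∀ ν, ContDiff ℝ 2 (α ν))
    (x : Pt m k) (r : Fin m) :
    fderiv ℝ (Lpt α) x ((0 : Fin (m+k) → ℝ), Pi.single r 1, (0:ℝ))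
      = ((0 : Fin (m+k) → ℝ),
         Fin.append (Pi.single r (1:ℝ)) (fun ν => pv (α ν) r x), (0:ℝ)) := by
  have hu := diff_uhat α hα
  have h1 : fderiv ℝ (Lpt α) x
      = (fderiv ℝ (fun x : Pt m k => x.1) x).prod
        (fderiv ℝ (fun x : Pt m k => (uhat α x, x.2.2)) x) :=
    DifferentiableAt.fderiv_prodMk differentiableAt_fst
      ((hu x).prodMk differentiableAt_snd.snd)
  have h2 : fderiv ℝ (fun x : Pt m k => (uhat α x, x.2.2)) x
      = (fderiv ℝ (uhat α) x).prod (fderiv ℝ (fun x : Pt m k => x.2.2) x) :=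
    DifferentiableAt.fderiv_prodMk (hu x) differentiableAt_snd.snd
  rw [h1]
  simp only [ContinuousLinearMap.prod_apply, h2]
  refine Prod.ext ?_ (Prod.ext ?_ ?_)
  · simp [fderiv_fst]
  · -- uhat component
    have hpi : fderiv ℝ (uhat α) x
        = ContinuousLinearMap.pi (fun i => fderiv ℝ (fun x => uhat α x i) x) := by
      apply fderiv_pi
      intro i
      exact (differentiable_pi.1 hu i) x
    rw [hpi]
    funext i
    simp only [ContinuousLinearMap.pi_apply]
    refine Fin.addCases (motive := fun i =>
      fderiv ℝ (fun x => uhat α x i) x ((0 : Fin (m+k) → ℝ), Pi.single r 1, (0:ℝ))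
        = Fin.append (Pi.single r (1:ℝ)) (fun ν => pv (α ν) r x) i)
      (fun r' => ?_) (fun ν => ?_) i
    · show fderiv ℝ (fun x => uhat α x (Fin.castAdd k r')) x _
        = Fin.append (Pi.single r (1:ℝ)) (fun ν => pv (α ν) r x) (Fin.castAdd k r')
      have h : (fun x : Pt m k => uhat α x (Fin.castAdd k r')) = fun x => x.2.1 r' := by
        funext x; simp [uhat, Fin.append_left]
      rw [h, Fin.append_left]
      have : fderiv ℝ (fun x : Pt m k => x.2.1 r') x
          = (ContinuousLinearMap.proj r').comp
            ((ContinuousLinearMap.fst ℝ (Fin m → ℝ) ℝ).comp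
              (ContinuousLinearMap.snd ℝ (Fin (m+k) → ℝ) ((Fin m → ℝ) × ℝ))) :=
        (((ContinuousLinearMap.proj r').comp
            ((ContinuousLinearMap.fst ℝ (Fin m → ℝ) ℝ).comp
              (ContinuousLinearMap.snd ℝ (Fin (m+k) → ℝ) ((Fin m → ℝ) × ℝ)))).hasFDerivAt).fderiv
      rw [this]
      rfl
    · show fderiv ℝ (fun x => uhat α x (Fin.natAdd m ν)) x _
        = Fin.append (Pi.single r (1:ℝ)) (fun ν => pv (α ν) r x) (Fin.natAdd m ν)
      have h : (fun x : Pt m k => uhat α x (Fin.natAdd m ν)) = fun x => α ν x := by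
        funext x; simp [uhat, Fin.append_right]
      rw [h, Fin.append_right]
      rfl
  · have : fderiv ℝ (fun x : Pt m k => x.2.2) x
        = (ContinuousLinearMap.snd ℝ (Fin m → ℝ) ℝ).comp
            (ContinuousLinearMap.snd ℝ (Fin (m+k) → ℝ) ((Fin m → ℝ) × ℝ)) :=
      (((ContinuousLinearMap.snd ℝ (Fin m → ℝ) ℝ).comp
          (ContinuousLinearMap.snd ℝ (Fin (m+k) → ℝ) ((Fin m → ℝ) × ℝ))).hasFDerivAt).fderiv
    rw [this]
    rfl

lemma fderiv_L_vec (L : PtL m k → ℝ) (hL : ContDiff ℝ 2 L)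
    (y : PtL m k) (w : Fin (m+k) → ℝ) :
    fderiv ℝ L y ((0 : Fin (m+k) → ℝ), w, (0:ℝ)) = ∑ i, w i * pv L i y := by
  have hw : ((0 : Fin (m+k) → ℝ), w, (0:ℝ))
      = ∑ i, w i • (((0 : Fin (m+k) → ℝ), Pi.single i (1:ℝ), (0:ℝ)) :
          (Fin (m+k) → ℝ) × (Fin (m+k) → ℝ) × ℝ) := by
    refine Prod.ext ?_ (Prod.ext ?_ ?_)
    · rw [Prod.fst_sum]; simp
    · rw [Prod.snd_sum, Prod.fst_sum]
      simp only [Prod.smul_mk]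
      funext j
      simp [Pi.single_apply, Finset.sum_ite_eq', mul_comm]
    · rw [Prod.snd_sum]
      simp [Prod.snd_sum]
  rw [hw, map_sum]
  simp only [map_smul, smul_eq_mul]
  rfl

lemma pv_Lstar (L : PtL m k → ℝ) (hL : ContDiff ℝ 2 L)
    (α : Fin k → Pt m k → ℝ) (hα : ∀ ν, ContDiff ℝ 2 (α ν)) (r : Fin m) (x : Pt m k) :
    pv (Lstar L α) r x
      = pv L (Fin.castAdd k r) (Lpt α x)
        + ∑ ν, pv (α ν) r x * pv L (Fin.natAdd m ν) (Lpt α x) := by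
  have hcomp : fderiv ℝ (Lstar L α) x
      = (fderiv ℝ L (Lpt α x)).comp (fderiv ℝ (Lpt α) x) :=
    fderiv_comp x ((hL.differentiable (by norm_num)).differentiableAt)
      ((diff_Lpt α hα).differentiableAt)
  have h0 : pv (Lstar L α) r x = fderiv ℝ L (Lpt α x)
      ((0 : Fin (m+k) → ℝ),
        Fin.append (Pi.single r (1:ℝ)) (fun ν => pv (α ν) r x), (0:ℝ)) := by
    rw [pv, hcomp, ContinuousLinearMap.comp_apply, fderiv_Lpt α hα x r]
  rw [h0, fderiv_L_vec L hL, Fin.sum_univ_add]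
  congr 1
  · simp only [Fin.append_left]
    rw [Finset.sum_eq_single r]
    · simp [pv]
    · intro b _ hb
      simp [Pi.single_eq_of_ne hb]
    · intro h; exact absurd (Finset.mem_univ r) h
  · simp only [Fin.append_right]

lemma key (L : PtL m k → ℝ) (hL : ContDiff ℝ 2 L)
    (α : Fin k → Pt m k → ℝ) (hα : ∀ ν, ContDiff ℝ 2 (α ν)) (x : Pt m k) :
    Estar L α x - En L α x
      = ∑ ν, (abar α ν x - α ν x) * pv L (Fin.natAdd m ν) (Lpt α x) := by
  unfold Estar En abar
  simp only [pv_Lstar L hL α hα]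
  rw [Fin.sum_univ_add]
  simp only [uhat, Fin.append_left, Fin.append_right]
  simp only [mul_add, Finset.sum_add_distrib, Finset.mul_sum, sub_mul,
    Finset.sum_sub_distrib, Finset.sum_mul, mul_assoc]
  rw [Finset.sum_comm]
  ring

theorem energy_equality_iff (m k : ℕ) (hm : 0 < m) (hk : 0 < k)
    (L : PtL m k → ℝ) (hL : ContDiff ℝ 2 L)
    (α : Fin k → Pt m k → ℝ) (hα : ∀ ν, ContDiff ℝ 2 (α ν))
 :
    ((∀ (ν : Fin k) (x : Pt m k), abar α ν x = α ν x) →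
      ∀ x : Pt m k, Estar L α x = En L α x)
    ∧ (∀ (L₁ : PtL m 1 → ℝ), ContDiff ℝ 2 L₁ →
        ∀ (α₁ : Fin 1 → Pt m 1 → ℝ), (∀ ν, ContDiff ℝ 2 (α₁ ν)) →
        (∀ x : Pt m 1, pv L₁ (Fin.natAdd m (0 : Fin 1)) (Lpt α₁ x) ≠ 0) →
        (∀ x : Pt m 1, Estar L₁ α₁ x = En L₁ α₁ x) →
        ∀ x : Pt m 1, abar α₁ (0 : Fin 1) x = α₁ (0 : Fin 1) x) := by
  constructor
  · intro h x
    have hkey := key L hL α hα x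
    simp only [h, sub_self, zero_mul, Finset.sum_const_zero] at hkey
    linarith
  · intro L₁ hL₁ α₁ hα₁ hne hEE x
    have hkey := key L₁ hL₁ α₁ hα₁ x
    rw [hEE x, sub_self, Fin.sum_univ_one] at hkey
    rcases mul_eq_zero.1 hkey.symm with h | h
    · linarith
    · exact absurd h (hne x)

end NH
end
end

section
/- Assume ᾱ_ν(q,v,t) = α_ν(q,v,t) for every ν = 1,…,k and every (q,v,t). Then: (i) if (∂L/∂t)(q,u,t) = 0 for all (q,u,t), the function E* is a first integral, i.e. t ↦ E*(q(t),v(t),t) is constant along every C² curve satisfying the constraints and solving the Voronec equations; (ii) conversely, if t ↦ E*(q(t),v(t),t) is constant along such a curve, then (∂L/∂t)(q(t), û(q(t),v(t),t), t) = 0 at every time t along that curve. -/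
open scoped BigOperators
noncomputable section
namespace NH

variable {m k : ℕ}

lemma sum_smul_single {n : ℕ} (a : Fin n → ℝ) :
    ∑ i, a i • (Pi.single i (1:ℝ) : Fin n → ℝ) = a := by
  funext j
  simp [Finset.sum_apply, Pi.single_apply]

lemma clm_expand {n m' : ℕ} (φ : ((Fin n → ℝ) × (Fin m' → ℝ) × ℝ) →L[ℝ] ℝ)
    (a : Fin n → ℝ) (b : Fin m' → ℝ) (c : ℝ) :
    φ (a, b, c) = (∑ i, a i * φ (Pi.single i 1, 0, 0))
      + (∑ j, b j * φ (0, Pi.single j 1, 0)) + c * φ (0, 0, 1) := by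
  have hsplit : φ (a, b, c) = φ (a, 0, 0) + φ (0, b, 0) + φ (0, 0, c) := by
    rw [← map_add, ← map_add]
    congr 1 <;> simp [Prod.ext_iff]
  have h1 : ((a, 0, 0) : (Fin n → ℝ) × (Fin m' → ℝ) × ℝ)
      = ∑ i, a i • (((Pi.single i 1 : Fin n → ℝ), (0:Fin m' → ℝ), (0:ℝ))
          : (Fin n → ℝ) × (Fin m' → ℝ) × ℝ) := by
    refine Prod.ext ?_ (Prod.ext ?_ ?_) <;> simp [Prod.fst_sum, Prod.snd_sum, sum_smul_single]
  have h2 : (((0:Fin n → ℝ), b, 0) : (Fin n → ℝ) × (Fin m' → ℝ) × ℝ)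
      = ∑ j, b j • (((0:Fin n → ℝ), (Pi.single j 1 : Fin m' → ℝ), (0:ℝ))
          : (Fin n → ℝ) × (Fin m' → ℝ) × ℝ) := by
    refine Prod.ext ?_ (Prod.ext ?_ ?_) <;> simp [Prod.fst_sum, Prod.snd_sum, sum_smul_single]
  have h3 : (((0:Fin n → ℝ), (0:Fin m' → ℝ), c) : (Fin n → ℝ) × (Fin m' → ℝ) × ℝ)
      = c • (((0:Fin n → ℝ), (0:Fin m' → ℝ), (1:ℝ)) : (Fin n → ℝ) × (Fin m' → ℝ) × ℝ) := by
    simp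
  rw [hsplit, h1, h2, h3, map_sum, map_sum, map_smul]
  simp only [smul_eq_mul]
  congr 1
  · congr 1 <;> exact Finset.sum_congr rfl fun i _ => by rw [map_smul, smul_eq_mul]

lemma sum_mul_sum_swap {m' k' : ℕ} (v : Fin m' → ℝ) (g : Fin m' → Fin k' → ℝ) (c : Fin k' → ℝ) :
    ∑ r, v r * ∑ ν, g r ν * c ν = ∑ ν, (∑ r, v r * g r ν) * c ν := by
  simp only [Finset.mul_sum, Finset.sum_mul]
  rw [Finset.sum_comm]
  exact Finset.sum_congr rfl fun ν _ => Finset.sum_congr rfl fun r _ => (mul_assoc _ _ _).symm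

lemma contDiff_pv' {n m' : ℕ} (f : (Fin n → ℝ) × (Fin m' → ℝ) × ℝ → ℝ)
    (hf : ContDiff ℝ 2 f) (j : Fin m') : ContDiff ℝ 1 (pv f j) :=
  (ContinuousLinearMap.apply ℝ ℝ (((0:Fin n → ℝ), Pi.single j 1, (0:ℝ))
      : (Fin n → ℝ) × (Fin m' → ℝ) × ℝ)).contDiff.comp (hf.fderiv_right (by norm_num))

lemma contDiff_uhat (α : Fin k → Pt m k → ℝ) (hα : ∀ ν, ContDiff ℝ 2 (α ν)) :
    ContDiff ℝ 2 (uhat α) := by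
  rw [contDiff_pi]
  intro i
  induction i using Fin.addCases with
  | left r =>
      have e : (fun x : Pt m k => uhat α x (Fin.castAdd k r)) = fun x : Pt m k => x.2.1 r := by
        funext x; exact Fin.append_left _ _ r
      rw [e]
      exact ((contDiff_pi.1 contDiff_id) r).comp (contDiff_fst.comp contDiff_snd)
  | right ν =>
      have e : (fun x : Pt m k => uhat α x (Fin.natAdd m ν)) = α ν := by
        funext x; exact Fin.append_right _ _ ν
      rw [e]; exact hα ν

lemma contDiff_Lstar (L : PtL m k → ℝ) (hL : ContDiff ℝ 2 L)
    (α : Fin k → Pt m k → ℝ) (hα : ∀ ν, ContDiff ℝ 2 (α ν)) :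
    ContDiff ℝ 2 (Lstar L α) :=
  hL.comp (ContDiff.prodMk contDiff_fst ((contDiff_uhat α hα).prodMk (ContDiff.comp contDiff_snd contDiff_snd)))

lemma contDiff_vel (q : ℝ → Fin (m+k) → ℝ) (hq : ContDiff ℝ 2 q) (r : Fin m) :
    ContDiff ℝ 1 (fun s => vel m k q s r) := by
  have h2 : ContDiff ℝ ((1:ℕ∞)+1) (fun s => q s (Fin.castAdd k r)) := by
    have := (contDiff_pi.1 hq) (Fin.castAdd k r)
    norm_num at this ⊢; exact this
  exact (contDiff_succ_iff_deriv.1 h2).2.2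

def vdot (q : ℝ → Fin (m+k) → ℝ) (t : ℝ) (r : Fin m) : ℝ :=
  deriv (fun s => vel m k q s r) t

lemma hasDerivAt_along (q : ℝ → Fin (m+k) → ℝ) (hq : ContDiff ℝ 2 q) (t : ℝ) :
    HasDerivAt (along m k q) ((qdot q t, vdot q t, (1:ℝ)) : Pt m k) t := by
  have h1 : HasDerivAt (fun s => q s) (qdot q t) t := by
    rw [hasDerivAt_pi]
    intro i
    exact (((contDiff_pi.1 hq) i).differentiable (by norm_num) t).hasDerivAt
  have h2 : HasDerivAt (fun s => vel m k q s) (vdot q t) t := by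
    rw [hasDerivAt_pi]
    intro r
    exact ((contDiff_vel q hq r).differentiable one_ne_zero t).hasDerivAt
  exact HasDerivAt.prodMk h1 (HasDerivAt.prodMk h2 (hasDerivAt_id t))

lemma hasDerivAt_comp_along (q : ℝ → Fin (m+k) → ℝ) (hq : ContDiff ℝ 2 q)
    (α : Fin k → Pt m k → ℝ) (hcon : Constrained α q)
    (f : Pt m k → ℝ) (hf : ContDiff ℝ 1 f) (t : ℝ) :
    HasDerivAt (fun s => f (along m k q s))
      ((∑ r, vel m k q t r * pq f (Fin.castAdd k r) (along m k q t))
        + (∑ ν, α ν (along m k q t) * pq f (Fin.natAdd m ν) (along m k q t))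
        + (∑ r, vdot q t r * pv f r (along m k q t))
        + pt f (along m k q t)) t := by
  have hal := hasDerivAt_along q hq t
  have hfd := (hf.differentiable one_ne_zero (along m k q t)).hasFDerivAt
  have h := hfd.comp_hasDerivAt t hal
  refine h.congr_deriv ?_
  rw [clm_expand]
  rw [Fin.sum_univ_add (f := fun i => qdot q t i * fderiv ℝ f (along m k q t) (Pi.single i 1, 0, 0))]
  have hc : ∀ ν, qdot q t (Fin.natAdd m ν) = α ν (along m k q t) := hcon t
  simp only [pq, pv, pt, vel, hc]
  ring

lemma pt_Lstar (L : PtL m k → ℝ) (hL : ContDiff ℝ 2 L)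
    (α : Fin k → Pt m k → ℝ) (hα : ∀ ν, ContDiff ℝ 2 (α ν)) (x : Pt m k) :
    pt (Lstar L α) x
      = pt L (Lpt α x) + ∑ ν, pv L (Fin.natAdd m ν) (Lpt α x) * pt (α ν) x := by
  have hline : HasDerivAt (fun s : ℝ => ((x.1, x.2.1, s) : Pt m k))
      (((0:Fin (m+k) → ℝ), (0:Fin m → ℝ), (1:ℝ)) : Pt m k) x.2.2 :=
    HasDerivAt.prodMk (hasDerivAt_const _ _) (HasDerivAt.prodMk (hasDerivAt_const _ _) (hasDerivAt_id _))
  have h1 : HasDerivAt (fun s => Lstar L α (x.1, x.2.1, s)) (pt (Lstar L α) x) x.2.2 :=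
    by
      have hd := (((contDiff_Lstar L hL α hα).differentiable (by norm_num)) x).hasFDerivAt.comp_hasDerivAt
        x.2.2 hline
      exact hd
  have hc : HasDerivAt (fun s => Lpt α (x.1, x.2.1, s))
      (((0:Fin (m+k) → ℝ), Fin.append (0:Fin m → ℝ) (fun ν => pt (α ν) x), (1:ℝ)) : PtL m k)
      x.2.2 := by
    refine HasDerivAt.prodMk (hasDerivAt_const _ _) (HasDerivAt.prodMk ?_ (hasDerivAt_id _))
    rw [hasDerivAt_pi]
    intro i
    induction i using Fin.addCases with
    | left r =>
        have e : (fun s : ℝ => uhat α (x.1, x.2.1, s) (Fin.castAdd k r))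
            = fun _ : ℝ => x.2.1 r := by
          funext s; exact Fin.append_left _ _ r
        rw [show (Fin.append (0:Fin m → ℝ) (fun ν => pt (α ν) x)) (Fin.castAdd k r)
            = 0 from Fin.append_left _ _ r, e]
        exact hasDerivAt_const _ _
    | right ν =>
        have e : (fun s : ℝ => uhat α (x.1, x.2.1, s) (Fin.natAdd m ν))
            = fun s : ℝ => α ν (x.1, x.2.1, s) := by
          funext s; exact Fin.append_right _ _ ν
        rw [show (Fin.append (0:Fin m → ℝ) (fun ν => pt (α ν) x)) (Fin.natAdd m ν)
            = pt (α ν) x from Fin.append_right _ _ ν, e]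
        exact (((hα ν).differentiable (by norm_num)) x).hasFDerivAt.comp_hasDerivAt x.2.2 hline
  have h2 : HasDerivAt (fun s => Lstar L α (x.1, x.2.1, s))
      (fderiv ℝ L (Lpt α x)
        (((0:Fin (m+k) → ℝ), Fin.append (0:Fin m → ℝ) (fun ν => pt (α ν) x), (1:ℝ)) : PtL m k))
      x.2.2 :=
    ((hL.differentiable (by norm_num)) (Lpt α x)).hasFDerivAt.comp_hasDerivAt x.2.2 hc
  rw [h1.unique h2, clm_expand,
    Fin.sum_univ_add (f := fun j => (Fin.append (0:Fin m → ℝ) (fun ν => pt (α ν) x)) j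
      * fderiv ℝ L (Lpt α x) (0, Pi.single j 1, 0))]
  simp only [Fin.append_left, Fin.append_right, Pi.zero_apply, zero_mul,
    Finset.sum_const_zero, Pi.single_zero, zero_add, one_mul]
  rw [add_comm]
  congr 1
  exact Finset.sum_congr rfl fun ν _ => mul_comm _ _

lemma diffAt_pv_comp_along {f : Pt m k → ℝ} (hf : ContDiff ℝ 2 f)
    (q : ℝ → Fin (m+k) → ℝ) (hq : ContDiff ℝ 2 q) (r : Fin m) (t : ℝ) :
    HasDerivAt (fun s => pv f r (along m k q s))
      (deriv (fun s => pv f r (along m k q s)) t) t := by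
  have h : DifferentiableAt ℝ (fun s => pv f r (along m k q s)) t :=
    (((contDiff_pv' f hf r).differentiable one_ne_zero) (along m k q t)).comp t
      (hasDerivAt_along q hq t).differentiableAt
  exact h.hasDerivAt

lemma sum_vB (α : Fin k → Pt m k → ℝ) (hα : ∀ ν, ContDiff ℝ 2 (α ν))
    (habar : ∀ (ν : Fin k) (x : Pt m k), abar α ν x = α ν x)
    (q : ℝ → Fin (m+k) → ℝ) (hq : ContDiff ℝ 2 q) (hcon : Constrained α q)
    (ν : Fin k) (t : ℝ) :
    ∑ r, vel m k q t r * Bco α q r ν t = pt (α ν) (along m k q t) := by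
  have hvel : ∀ r : Fin m, HasDerivAt (fun s => vel m k q s r) (vdot q t r) t := fun r =>
    ((contDiff_vel q hq r).differentiable one_ne_zero t).hasDerivAt
  have hLHS : HasDerivAt (fun s => ∑ r, vel m k q s r * pv (α ν) r (along m k q s))
      (∑ r, (vdot q t r * pv (α ν) r (along m k q t)
        + vel m k q t r * deriv (fun s => pv (α ν) r (along m k q s)) t)) t :=
    HasDerivAt.fun_sum fun r _ => (hvel r).mul (diffAt_pv_comp_along (hα ν) q hq r t)
  have heq : (fun s => ∑ r, vel m k q s r * pv (α ν) r (along m k q s))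
      = fun s => α ν (along m k q s) := by
    funext s; exact habar ν (along m k q s)
  rw [heq] at hLHS
  have hRHS := hasDerivAt_comp_along q hq α hcon (α ν) ((hα ν).of_le (by norm_num)) t
  have huniq := hLHS.unique hRHS
  rw [Finset.sum_add_distrib] at huniq
  have hswap : ∑ r, vel m k q t r
        * ∑ μ, pv (α μ) r (along m k q t) * pq (α ν) (Fin.natAdd m μ) (along m k q t)
      = ∑ μ, α μ (along m k q t) * pq (α ν) (Fin.natAdd m μ) (along m k q t) := by
    rw [sum_mul_sum_swap (v := vel m k q t)
      (g := fun r μ => pv (α μ) r (along m k q t))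
      (c := fun μ => pq (α ν) (Fin.natAdd m μ) (along m k q t))]
    exact Finset.sum_congr rfl fun μ _ => by
      rw [show (∑ r, vel m k q t r * pv (α μ) r (along m k q t)) = α μ (along m k q t)
        from habar μ (along m k q t)]
  simp only [Bco, mul_sub, Finset.sum_sub_distrib]
  rw [hswap]
  linarith [huniq]

lemma key_s6 (L : PtL m k → ℝ) (hL : ContDiff ℝ 2 L)
    (α : Fin k → Pt m k → ℝ) (hα : ∀ ν, ContDiff ℝ 2 (α ν))
    (habar : ∀ (ν : Fin k) (x : Pt m k), abar α ν x = α ν x)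
    (q : ℝ → Fin (m+k) → ℝ) (hq : ContDiff ℝ 2 q) (hcon : Constrained α q)
    (hvor : Voronec L α q) (t : ℝ) :
    HasDerivAt (fun s => Estar L α (along m k q s))
      (-(pt L (Lpt α (along m k q t)))) t := by
  have hLs2 : ContDiff ℝ 2 (Lstar L α) := contDiff_Lstar L hL α hα
  have hvel : ∀ r : Fin m, HasDerivAt (fun s => vel m k q s r) (vdot q t r) t := fun r =>
    ((contDiff_vel q hq r).differentiable one_ne_zero t).hasDerivAt
  have h1 : HasDerivAt (fun s => ∑ r, vel m k q s r * pv (Lstar L α) r (along m k q s))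
      (∑ r, (vdot q t r * pv (Lstar L α) r (along m k q t)
        + vel m k q t r * deriv (fun s => pv (Lstar L α) r (along m k q s)) t)) t :=
    HasDerivAt.fun_sum fun r _ => (hvel r).mul (diffAt_pv_comp_along hLs2 q hq r t)
  have h2 := hasDerivAt_comp_along q hq α hcon (Lstar L α) (hLs2.of_le (by norm_num)) t
  have hE := h1.sub h2
  have hfun : (fun s => Estar L α (along m k q s))
      = fun s => (∑ r, vel m k q s r * pv (Lstar L α) r (along m k q s))
          - Lstar L α (along m k q s) := rfl
  rw [hfun]
  refine hE.congr_deriv ?_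
  -- now prove the value identity
  have hvor' : ∀ r : Fin m, deriv (fun s => pv (Lstar L α) r (along m k q s)) t
      = pq (Lstar L α) (Fin.castAdd k r) (along m k q t)
        + (∑ ν, pq (Lstar L α) (Fin.natAdd m ν) (along m k q t) * pv (α ν) r (along m k q t))
        + ∑ ν, Bco α q r ν t * pv L (Fin.natAdd m ν) (Lpt α (along m k q t)) := by
    intro r
    have := hvor r t
    linarith
  have e1 : ∑ r, vel m k q t r * deriv (fun s => pv (Lstar L α) r (along m k q s)) t
      = (∑ r, vel m k q t r * pq (Lstar L α) (Fin.castAdd k r) (along m k q t))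
        + (∑ r, vel m k q t r
            * ∑ ν, pq (Lstar L α) (Fin.natAdd m ν) (along m k q t) * pv (α ν) r (along m k q t))
        + ∑ r, vel m k q t r
            * ∑ ν, Bco α q r ν t * pv L (Fin.natAdd m ν) (Lpt α (along m k q t)) := by
    simp only [hvor', mul_add, Finset.sum_add_distrib]
  have e2 : ∑ r, vel m k q t r
        * ∑ ν, pq (Lstar L α) (Fin.natAdd m ν) (along m k q t) * pv (α ν) r (along m k q t)
      = ∑ ν, α ν (along m k q t) * pq (Lstar L α) (Fin.natAdd m ν) (along m k q t) := by
    have hcomm : ∀ r : Fin m, (∑ ν, pq (Lstar L α) (Fin.natAdd m ν) (along m k q t)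
          * pv (α ν) r (along m k q t))
        = ∑ ν, pv (α ν) r (along m k q t)
          * pq (Lstar L α) (Fin.natAdd m ν) (along m k q t) :=
      fun r => Finset.sum_congr rfl fun ν _ => mul_comm _ _
    simp only [hcomm]
    rw [sum_mul_sum_swap (v := vel m k q t)
      (g := fun r ν => pv (α ν) r (along m k q t))
      (c := fun ν => pq (Lstar L α) (Fin.natAdd m ν) (along m k q t))]
    exact Finset.sum_congr rfl fun ν _ => by
      rw [show (∑ r, vel m k q t r * pv (α ν) r (along m k q t)) = α ν (along m k q t)
        from habar ν (along m k q t)]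
  have e3 : ∑ r, vel m k q t r
        * ∑ ν, Bco α q r ν t * pv L (Fin.natAdd m ν) (Lpt α (along m k q t))
      = ∑ ν, pt (α ν) (along m k q t) * pv L (Fin.natAdd m ν) (Lpt α (along m k q t)) := by
    rw [sum_mul_sum_swap (v := vel m k q t) (g := fun r ν => Bco α q r ν t)
      (c := fun ν => pv L (Fin.natAdd m ν) (Lpt α (along m k q t)))]
    exact Finset.sum_congr rfl fun ν _ => by
      rw [sum_vB α hα habar q hq hcon ν t]
  have e4 := pt_Lstar L hL α hα (along m k q t)
  have e5 : ∑ ν, pt (α ν) (along m k q t) * pv L (Fin.natAdd m ν) (Lpt α (along m k q t))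
      = ∑ ν, pv L (Fin.natAdd m ν) (Lpt α (along m k q t)) * pt (α ν) (along m k q t) :=
    Finset.sum_congr rfl fun ν _ => mul_comm _ _
  rw [Finset.sum_add_distrib, e1]
  linarith [e2, e3, e4, e5]

theorem first_integral_iff' (m k : ℕ)
    (L : PtL m k → ℝ) (hL : ContDiff ℝ 2 L)
    (α : Fin k → Pt m k → ℝ) (hα : ∀ ν, ContDiff ℝ 2 (α ν))
    (habar : ∀ (ν : Fin k) (x : Pt m k), abar α ν x = α ν x) :
    ((∀ x : PtL m k, pt L x = 0) →
      ∀ (q : ℝ → Fin (m+k) → ℝ), ContDiff ℝ 2 q → Constrained α q → Voronec L α q →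
        ∀ t₁ t₂ : ℝ, Estar L α (along m k q t₁) = Estar L α (along m k q t₂))
    ∧ (∀ (q : ℝ → Fin (m+k) → ℝ), ContDiff ℝ 2 q → Constrained α q → Voronec L α q →
        (∀ t₁ t₂ : ℝ, Estar L α (along m k q t₁) = Estar L α (along m k q t₂)) →
        ∀ t : ℝ, pt L (Lpt α (along m k q t)) = 0) := by
  constructor
  · intro hpt q hq hcon hvor t₁ t₂
    have hd : ∀ t : ℝ, HasDerivAt (fun s => Estar L α (along m k q s))
        (-(pt L (Lpt α (along m k q t)))) t :=
      fun t => key_s6 L hL α hα habar q hq hcon hvor t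
    exact is_const_of_deriv_eq_zero (fun t => (hd t).differentiableAt)
      (fun t => by rw [(hd t).deriv, hpt, neg_zero]) t₁ t₂
  · intro q hq hcon hvor hconst t
    have hd := key_s6 L hL α hα habar q hq hcon hvor t
    have hfun : (fun s => Estar L α (along m k q s))
        = fun _ => Estar L α (along m k q t) := funext fun s => hconst s t
    rw [hfun] at hd
    have h0 := hd.unique (hasDerivAt_const t _)
    linarith

theorem first_integral_iff (m k : ℕ) (hm : 0 < m) (hk : 0 < k)
    (L : PtL m k → ℝ) (hL : ContDiff ℝ 2 L)
    (α : Fin k → Pt m k → ℝ) (hα : ∀ ν, ContDiff ℝ 2 (α ν))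
    (habar : ∀ (ν : Fin k) (x : Pt m k), abar α ν x = α ν x) :
    ((∀ x : PtL m k, pt L x = 0) →
      ∀ (q : ℝ → Fin (m+k) → ℝ), ContDiff ℝ 2 q → Constrained α q → Voronec L α q →
        ∀ t₁ t₂ : ℝ, Estar L α (along m k q t₁) = Estar L α (along m k q t₂))
    ∧ (∀ (q : ℝ → Fin (m+k) → ℝ), ContDiff ℝ 2 q → Constrained α q → Voronec L α q →
        (∀ t₁ t₂ : ℝ, Estar L α (along m k q t₁) = Estar L α (along m k q t₂)) →
        ∀ t : ℝ, pt L (Lpt α (along m k q t)) = 0) := by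
  exact first_integral_iff' m k L hL α hα habar

end NH
end
end

section
/- Let the Lagrangian be L(q,u) = ½∑_{i,j=1}^n g_{ij}(q) u_i u_j + ∑_{i=1}^n b_i(q) u_i + c(q) + U(q), with g_{ij} = g_{ji} C² and all coefficients independent of t, and suppose the constraint functions α_ν are independent of t and satisfy ᾱ_ν(q,v) = α_ν(q,v) for every ν and every (q,v). Then along every C² curve satisfying the constraints and solving the Voronec equations, the Jacobi-type quantity ½∑_{r,s=1}^m g_{rs}(q) q̇_r q̇_s + ½∑_{ν,μ=1}^k g_{m+ν,m+μ}(q) α_ν α_μ + ∑_{r=1}^m ∑_{ν=1}^k g_{r,m+ν}(q) q̇_r α_ν − U(q) − c(q) (with α_ν = α_ν(q(t),v(t))) is constant in t. -/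
open scoped BigOperators
noncomputable section
namespace NH

variable {m k : ℕ}

/-! ### Auxiliary lemmas -/

section Aux
variable {E : Type*} [NormedAddCommGroup E] [NormedSpace ℝ E]

private lemma line_hasDerivAt (f : E → ℝ) (x w : E) (hf : DifferentiableAt ℝ f x) :
    HasDerivAt (fun s : ℝ => f (x + s • w)) (fderiv ℝ f x w) 0 := by
  have hline : HasDerivAt (fun s : ℝ => x + s • w) w 0 := by
    simpa using ((hasDerivAt_id (0:ℝ)).smul_const w).const_add x
  have hf' : HasFDerivAt f (fderiv ℝ f x) ((fun s : ℝ => x + s • w) 0) := by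
    simpa using hf.hasFDerivAt
  exact hf'.comp_hasDerivAt 0 hline

private lemma fderiv_eq_deriv_line (f : E → ℝ) (x w : E) (hf : DifferentiableAt ℝ f x) :
    fderiv ℝ f x w = deriv (fun s : ℝ => f (x + s • w)) 0 :=
  ((line_hasDerivAt f x w hf).deriv).symm

private lemma contDiff_fderiv_apply (f : E → ℝ) (hf : ContDiff ℝ 2 f) (w : E) :
    ContDiff ℝ 1 (fun x => fderiv ℝ f x w) := by
  have h : ContDiff ℝ 1 (fderiv ℝ f) := hf.fderiv_right (by norm_num)
  exact ((ContinuousLinearMap.apply ℝ ℝ w).contDiff).comp h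

private lemma clm_decomp {m' n : ℕ} (φ : ((Fin n → ℝ) × (Fin m' → ℝ) × ℝ) →L[ℝ] ℝ)
    (a : Fin n → ℝ) (b : Fin m' → ℝ) (c : ℝ) :
    φ (a, b, c) = ∑ i, a i * φ (Pi.single i 1, 0, 0)
      + ∑ r, b r * φ (0, Pi.single r 1, 0) + c * φ (0, 0, 1) := by
  have ha : (a, b, c) = (∑ i, a i • ((Pi.single i (1:ℝ) : Fin n → ℝ), (0 : Fin m' → ℝ), (0:ℝ)))
      + (∑ r, b r • ((0 : Fin n → ℝ), (Pi.single r (1:ℝ) : Fin m' → ℝ), (0:ℝ)))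
      + c • ((0 : Fin n → ℝ), (0 : Fin m' → ℝ), (1:ℝ)) := by
    refine Prod.ext ?_ (Prod.ext ?_ ?_)
    · simp [Finset.sum_apply, Pi.single_apply, Prod.fst_sum]
      funext j
      simp [Finset.sum_apply, Pi.single_apply]
    · funext j
      simp [Prod.snd_sum, Prod.fst_sum, Finset.sum_apply, Pi.single_apply]
    · simp [Prod.snd_sum]
  rw [ha, map_add, map_add, map_sum, map_sum, map_smul, smul_eq_mul]
  congr 2
  · exact Finset.sum_congr rfl fun i _ => by rw [map_smul, smul_eq_mul]
  · exact Finset.sum_congr rfl fun r _ => by rw [map_smul, smul_eq_mul]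

private lemma quad_hasDerivAt {n : ℕ} (G : Fin n → Fin n → ℝ) (hG : ∀ i j, G i j = G j i)
    (B : Fin n → ℝ) (C1 C2 : ℝ) (f : Fin n → ℝ → ℝ) (d u : Fin n → ℝ)
    (hfd : ∀ i, HasDerivAt (f i) (d i) 0) (hf0 : ∀ i, f i 0 = u i) :
    HasDerivAt
      (fun s => (1/2) * ∑ i, ∑ j, G i j * f i s * f j s + ∑ i, B i * f i s + C1 + C2)
      (∑ i, d i * (∑ j, G i j * u j + B i)) 0 := by
  have h1 : HasDerivAt
      (fun s => (1/2) * ∑ i, ∑ j, G i j * f i s * f j s + ∑ i, B i * f i s + C1 + C2)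
      ((1/2) * ∑ i, ∑ j, G i j * (d i * u j + u i * d j) + ∑ i, B i * d i) 0 := by
    refine HasDerivAt.add_const _ ?_
    refine HasDerivAt.add_const _ ?_
    refine HasDerivAt.add ?_ ?_
    · refine HasDerivAt.const_mul _ ?_
      refine HasDerivAt.fun_sum fun i _ => HasDerivAt.fun_sum fun j _ => ?_
      have := (((hfd i).const_mul (G i j)).mul (hfd j))
      simpa [hf0, Pi.mul_def, mul_add, mul_comm, mul_assoc, mul_left_comm] using this
    · exact HasDerivAt.fun_sum fun i _ => (hfd i).const_mul (B i)
  convert h1 using 1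
  have hswap : ∑ i, ∑ j, G i j * (u i * d j) = ∑ i, ∑ j, G i j * (d i * u j) := by
    rw [Finset.sum_comm]
    refine Finset.sum_congr rfl fun i _ => Finset.sum_congr rfl fun j _ => ?_
    rw [hG j i]; ring
  have h2 : ∑ i, ∑ j, G i j * (d i * u j + u i * d j)
      = 2 * ∑ i, ∑ j, G i j * (d i * u j) := by
    simp only [mul_add, Finset.sum_add_distrib, hswap]; ring
  rw [h2, show (1/2:ℝ) * (2 * ∑ i, ∑ j, G i j * (d i * u j)) = ∑ i, ∑ j, G i j * (d i * u j) from
    by ring]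
  simp only [mul_add, Finset.sum_add_distrib, Finset.mul_sum]
  congr 1
  · exact Finset.sum_congr rfl fun i _ => Finset.sum_congr rfl fun j _ => by ring
  · exact Finset.sum_congr rfl fun i _ => by ring

end Aux

/-! ### Smoothness -/

private lemma contDiff_L
    (g : Fin (m+k) → Fin (m+k) → (Fin (m+k) → ℝ) → ℝ)
    (b : Fin (m+k) → (Fin (m+k) → ℝ) → ℝ)
    (c U : (Fin (m+k) → ℝ) → ℝ)
    (hg : ∀ i j, ContDiff ℝ 2 (g i j)) (hb : ∀ i, ContDiff ℝ 2 (b i))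
    (hc : ContDiff ℝ 2 c) (hU : ContDiff ℝ 2 U)
    (L : PtL m k → ℝ)
    (hLdef : ∀ x : PtL m k,
      L x = (1/2) * ∑ i : Fin (m+k), ∑ j : Fin (m+k), g i j x.1 * x.2.1 i * x.2.1 j
        + ∑ i : Fin (m+k), b i x.1 * x.2.1 i + c x.1 + U x.1) :
    ContDiff ℝ 2 L := by
  have hL : L = fun x : PtL m k => (1/2) * ∑ i, ∑ j, g i j x.1 * x.2.1 i * x.2.1 j
      + ∑ i, b i x.1 * x.2.1 i + c x.1 + U x.1 := funext hLdef
  rw [hL]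
  have hx1 : ContDiff ℝ 2 (fun x : PtL m k => x.1) := contDiff_fst
  have hu : ∀ i, ContDiff ℝ 2 (fun x : PtL m k => x.2.1 i) := fun i =>
    (ContinuousLinearMap.proj i : ((Fin (m+k)) → ℝ) →L[ℝ] ℝ).contDiff.comp
      (contDiff_fst.comp contDiff_snd)
  refine ContDiff.add (ContDiff.add (ContDiff.add ?_ ?_) (hc.comp hx1)) (hU.comp hx1)
  · exact contDiff_const.mul (ContDiff.sum fun i _ => ContDiff.sum fun j _ =>
      (((hg i j).comp hx1).mul (hu i)).mul (hu j))
  · exact ContDiff.sum fun i _ => ((hb i).comp hx1).mul (hu i)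

private lemma contDiff_uhat_apply (α : Fin k → Pt m k → ℝ) (hα : ∀ ν, ContDiff ℝ 2 (α ν))
    (i : Fin (m+k)) : ContDiff ℝ 2 (fun x : Pt m k => uhat α x i) := by
  refine Fin.addCases (motive := fun i => ContDiff ℝ 2 (fun x : Pt m k => uhat α x i))
    (fun r => ?_) (fun ν => ?_) i
  · simp only [uhat, Fin.append_left]
    exact (ContinuousLinearMap.proj r : ((Fin m) → ℝ) →L[ℝ] ℝ).contDiff.comp
      (contDiff_fst.comp contDiff_snd)
  · simp only [uhat, Fin.append_right]
    exact hα ν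

private lemma contDiff_Lpt (α : Fin k → Pt m k → ℝ) (hα : ∀ ν, ContDiff ℝ 2 (α ν)) :
    ContDiff ℝ 2 (Lpt α) := by
  have : ContDiff ℝ 2 (fun x : Pt m k => (x.1, uhat α x, x.2.2)) :=
    ContDiff.prodMk contDiff_fst
      (ContDiff.prodMk (contDiff_pi.mpr (contDiff_uhat_apply α hα)) (contDiff_snd.comp contDiff_snd))
  exact this

/-! ### Partial derivative formulas -/

private lemma pvL_eq
    (g : Fin (m+k) → Fin (m+k) → (Fin (m+k) → ℝ) → ℝ)
    (b : Fin (m+k) → (Fin (m+k) → ℝ) → ℝ)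
    (c U : (Fin (m+k) → ℝ) → ℝ)
    (hg : ∀ i j, ContDiff ℝ 2 (g i j)) (hgsym : ∀ i j x, g i j x = g j i x)
    (hb : ∀ i, ContDiff ℝ 2 (b i)) (hc : ContDiff ℝ 2 c) (hU : ContDiff ℝ 2 U)
    (L : PtL m k → ℝ)
    (hLdef : ∀ x : PtL m k,
      L x = (1/2) * ∑ i : Fin (m+k), ∑ j : Fin (m+k), g i j x.1 * x.2.1 i * x.2.1 j
        + ∑ i : Fin (m+k), b i x.1 * x.2.1 i + c x.1 + U x.1)
    (y : PtL m k) (i0 : Fin (m+k)) :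
    pv L i0 y = ∑ j, g i0 j y.1 * y.2.1 j + b i0 y.1 := by
  have hL2 : ContDiff ℝ 2 L := contDiff_L g b c U hg hb hc hU L hLdef
  have hdiff : DifferentiableAt ℝ L y := (hL2.differentiable (by norm_num)) y
  rw [pv, fderiv_eq_deriv_line _ _ _ hdiff]
  have hfun : (fun s : ℝ => L (y + s • ((0 : Fin (m+k) → ℝ), (Pi.single i0 1 : Fin (m+k) → ℝ), (0:ℝ))))
      = fun s => (1/2) * ∑ a, ∑ a', g a a' y.1 * (y.2.1 a + s * (Pi.single i0 1 : Fin (m+k) → ℝ) a)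
            * (y.2.1 a' + s * (Pi.single i0 1 : Fin (m+k) → ℝ) a')
          + ∑ a, b a y.1 * (y.2.1 a + s * (Pi.single i0 1 : Fin (m+k) → ℝ) a) + c y.1 + U y.1 := by
    funext s
    rw [hLdef]
    simp
  rw [hfun]
  have hq := quad_hasDerivAt (fun a a' => g a a' y.1) (fun a a' => hgsym a a' y.1)
      (fun a => b a y.1) (c y.1) (U y.1)
      (fun a s => y.2.1 a + s * (Pi.single i0 1 : Fin (m+k) → ℝ) a) ((Pi.single i0 1 : Fin (m+k) → ℝ)) y.2.1
      (fun a => by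
        simpa using ((hasDerivAt_id (0:ℝ)).mul_const ((Pi.single i0 1 : Fin (m+k) → ℝ) a)).const_add (y.2.1 a))
      (fun a => by simp)
  rw [hq.deriv]
  simp [Pi.single_apply, ite_mul, Finset.sum_ite_eq']

private lemma pvLstar_eq
    (g : Fin (m+k) → Fin (m+k) → (Fin (m+k) → ℝ) → ℝ)
    (b : Fin (m+k) → (Fin (m+k) → ℝ) → ℝ)
    (c U : (Fin (m+k) → ℝ) → ℝ)
    (hg : ∀ i j, ContDiff ℝ 2 (g i j)) (hgsym : ∀ i j x, g i j x = g j i x)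
    (hb : ∀ i, ContDiff ℝ 2 (b i)) (hc : ContDiff ℝ 2 c) (hU : ContDiff ℝ 2 U)
    (L : PtL m k → ℝ)
    (hLdef : ∀ x : PtL m k,
      L x = (1/2) * ∑ i : Fin (m+k), ∑ j : Fin (m+k), g i j x.1 * x.2.1 i * x.2.1 j
        + ∑ i : Fin (m+k), b i x.1 * x.2.1 i + c x.1 + U x.1)
    (α : Fin k → Pt m k → ℝ) (hα : ∀ ν, ContDiff ℝ 2 (α ν))
    (x : Pt m k) (r : Fin m) :
    pv (Lstar L α) r x
      = ∑ i, Fin.append ((Pi.single r 1 : Fin m → ℝ)) (fun ν => pv (α ν) r x) i * pv L i (Lpt α x) := by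
  have hL2 : ContDiff ℝ 2 L := contDiff_L g b c U hg hb hc hU L hLdef
  have hLs : ContDiff ℝ 2 (Lstar L α) := hL2.comp (contDiff_Lpt α hα)
  have hdiff : DifferentiableAt ℝ (Lstar L α) x := (hLs.differentiable (by norm_num)) x
  rw [pv, fderiv_eq_deriv_line _ _ _ hdiff]
  set w : Pt m k := ((0 : Fin (m+k) → ℝ), (Pi.single r 1 : Fin m → ℝ), (0:ℝ)) with hw
  have hfun : (fun s : ℝ => Lstar L α (x + s • w))
      = fun s => (1/2) * ∑ i, ∑ j, g i j x.1 * uhat α (x + s • w) i * uhat α (x + s • w) j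
          + ∑ i, b i x.1 * uhat α (x + s • w) i + c x.1 + U x.1 := by
    funext s
    rw [Lstar, hLdef]
    have h1 : (x + s • w).1 = x.1 := by simp [hw]
    simp [Lpt, h1]
  rw [hfun]
  have hfd : ∀ i, HasDerivAt (fun s : ℝ => uhat α (x + s • w) i)
      (Fin.append ((Pi.single r 1 : Fin m → ℝ)) (fun ν => pv (α ν) r x) i) 0 := by
    intro i
    refine Fin.addCases (motive := fun i => HasDerivAt (fun s : ℝ => uhat α (x + s • w) i)
      (Fin.append ((Pi.single r 1 : Fin m → ℝ)) (fun ν => pv (α ν) r x) i) 0) (fun r' => ?_) (fun ν => ?_) i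
    · show HasDerivAt (fun s : ℝ => uhat α (x + s • w) (Fin.castAdd k r'))
        (Fin.append ((Pi.single r 1 : Fin m → ℝ)) (fun ν => pv (α ν) r x) (Fin.castAdd k r')) 0
      have he : (fun s : ℝ => uhat α (x + s • w) (Fin.castAdd k r'))
          = fun s => x.2.1 r' + s * (Pi.single r 1 : Fin m → ℝ) r' := by
        funext s; simp [uhat, Fin.append_left, hw]
      rw [he, Fin.append_left]
      simpa using ((hasDerivAt_id (0:ℝ)).mul_const ((Pi.single r 1 : Fin m → ℝ) r')).const_add (x.2.1 r')
    · show HasDerivAt (fun s : ℝ => uhat α (x + s • w) (Fin.natAdd m ν))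
        (Fin.append ((Pi.single r 1 : Fin m → ℝ)) (fun ν => pv (α ν) r x) (Fin.natAdd m ν)) 0
      have he : (fun s : ℝ => uhat α (x + s • w) (Fin.natAdd m ν))
          = fun s => α ν (x + s • w) := by
        funext s; simp [uhat, Fin.append_right]
      rw [he, Fin.append_right]
      exact line_hasDerivAt (α ν) x w (((hα ν).differentiable (by norm_num)) x)
  have hf0 : ∀ i, (fun s : ℝ => uhat α (x + s • w) i) 0 = uhat α x i := by
    intro i; simp
  have hq := quad_hasDerivAt (fun i j => g i j x.1) (fun i j => hgsym i j x.1)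
      (fun i => b i x.1) (c x.1) (U x.1) (fun i s => uhat α (x + s • w) i)
      (Fin.append ((Pi.single r 1 : Fin m → ℝ)) (fun ν => pv (α ν) r x)) (uhat α x) hfd hf0
  rw [hq.deriv]
  refine Finset.sum_congr rfl fun i _ => ?_
  rw [pvL_eq g b c U hg hgsym hb hc hU L hLdef (Lpt α x) i]
  simp [Lpt]

private lemma sum_v_pvLstar
    (g : Fin (m+k) → Fin (m+k) → (Fin (m+k) → ℝ) → ℝ)
    (b : Fin (m+k) → (Fin (m+k) → ℝ) → ℝ)
    (c U : (Fin (m+k) → ℝ) → ℝ)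
    (hg : ∀ i j, ContDiff ℝ 2 (g i j)) (hgsym : ∀ i j x, g i j x = g j i x)
    (hb : ∀ i, ContDiff ℝ 2 (b i)) (hc : ContDiff ℝ 2 c) (hU : ContDiff ℝ 2 U)
    (L : PtL m k → ℝ)
    (hLdef : ∀ x : PtL m k,
      L x = (1/2) * ∑ i : Fin (m+k), ∑ j : Fin (m+k), g i j x.1 * x.2.1 i * x.2.1 j
        + ∑ i : Fin (m+k), b i x.1 * x.2.1 i + c x.1 + U x.1)
    (α : Fin k → Pt m k → ℝ) (hα : ∀ ν, ContDiff ℝ 2 (α ν))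
    (habar : ∀ (ν : Fin k) (x : Pt m k), abar α ν x = α ν x)
    (x : Pt m k) :
    ∑ r, x.2.1 r * pv (Lstar L α) r x = ∑ i, uhat α x i * pv L i (Lpt α x) := by
  have h := fun r => pvLstar_eq g b c U hg hgsym hb hc hU L hLdef α hα x r
  calc ∑ r, x.2.1 r * pv (Lstar L α) r x
      = ∑ r, ∑ i, x.2.1 r * (Fin.append ((Pi.single r 1 : Fin m → ℝ)) (fun ν => pv (α ν) r x) i
          * pv L i (Lpt α x)) := by
        refine Finset.sum_congr rfl fun r _ => ?_
        rw [h r, Finset.mul_sum]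
    _ = ∑ i, ∑ r, x.2.1 r * (Fin.append ((Pi.single r 1 : Fin m → ℝ)) (fun ν => pv (α ν) r x) i
          * pv L i (Lpt α x)) := Finset.sum_comm
    _ = ∑ i, uhat α x i * pv L i (Lpt α x) := by
        refine Finset.sum_congr rfl fun i _ => ?_
        refine Fin.addCases (motive := fun i => ∑ r, x.2.1 r
          * (Fin.append ((Pi.single r 1 : Fin m → ℝ)) (fun ν => pv (α ν) r x) i * pv L i (Lpt α x))
          = uhat α x i * pv L i (Lpt α x)) (fun r' => ?_) (fun ν => ?_) i
        · show ∑ r, x.2.1 r * (Fin.append ((Pi.single r 1 : Fin m → ℝ)) (fun ν => pv (α ν) r x)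
            (Fin.castAdd k r') * pv L (Fin.castAdd k r') (Lpt α x))
            = uhat α x (Fin.castAdd k r') * pv L (Fin.castAdd k r') (Lpt α x)
          simp [Fin.append_left, uhat, Pi.single_apply, ite_mul, mul_ite, mul_zero, zero_mul,
            Finset.sum_ite_eq]
        · show ∑ r, x.2.1 r * (Fin.append ((Pi.single r 1 : Fin m → ℝ)) (fun ν' => pv (α ν') r x)
            (Fin.natAdd m ν) * pv L (Fin.natAdd m ν) (Lpt α x))
            = uhat α x (Fin.natAdd m ν) * pv L (Fin.natAdd m ν) (Lpt α x)
          simp only [Fin.append_right, uhat, ← mul_assoc]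
          rw [← Finset.sum_mul]
          rw [show (∑ r, x.2.1 r * pv (α ν) r x) = α ν x from (habar ν x)]

/-! ### Chain rule along the curve -/

private lemma pt_eq_zero (f : Pt m k → ℝ) (x : Pt m k) (hf : DifferentiableAt ℝ f x)
    (ht : ∀ (Q : Fin (m+k) → ℝ) (v : Fin m → ℝ) (a a' : ℝ), f (Q, v, a) = f (Q, v, a')) :
    fderiv ℝ f x ((0 : Fin (m+k) → ℝ), (0 : Fin m → ℝ), (1:ℝ)) = 0 := by
  rw [fderiv_eq_deriv_line f x _ hf]
  have hconst : (fun s : ℝ => f (x + s • ((0 : Fin (m+k) → ℝ), (0 : Fin m → ℝ), (1:ℝ))))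
      = fun _ => f x := by
    funext s
    have hx : x + s • ((0 : Fin (m+k) → ℝ), (0 : Fin m → ℝ), (1:ℝ))
        = (x.1, x.2.1, x.2.2 + s) := by
      refine Prod.ext ?_ (Prod.ext ?_ ?_) <;> simp [mul_comm]
    rw [hx, ht x.1 x.2.1 (x.2.2 + s) x.2.2]
  rw [hconst, deriv_const]

private lemma along_hasDerivAt (q : ℝ → Fin (m+k) → ℝ) (hq : ContDiff ℝ 2 q) (t : ℝ) :
    HasDerivAt (fun s => along m k q s)
      (qdot q t, (fun r => deriv (fun s => vel m k q s r) t), 1) t := by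
  have hqc : ∀ i, ContDiff ℝ 2 fun s => q s i := fun i => contDiff_pi.mp hq i
  have hQ : HasDerivAt q (qdot q t) t :=
    hasDerivAt_pi.mpr fun i => (((hqc i).differentiable (by norm_num)) t).hasDerivAt
  have hvelc : ∀ r, ContDiff ℝ 1 fun s => vel m k q s r := by
    intro r
    have h2 : ContDiff ℝ ((1 : ℕ) + 1) (fun s => q s (Fin.castAdd k r)) := by
      exact_mod_cast hqc (Fin.castAdd k r)
    have h3 := (contDiff_succ_iff_deriv.mp h2).2.2
    exact h3
  have hV : HasDerivAt (fun s => vel m k q s) (fun r => deriv (fun s => vel m k q s r) t) t :=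
    hasDerivAt_pi.mpr fun r => (((hvelc r).differentiable one_ne_zero) t).hasDerivAt
  exact hQ.prodMk (hV.prodMk (hasDerivAt_id t))

private lemma chain_along
    (α : Fin k → Pt m k → ℝ)
    (q : ℝ → Fin (m+k) → ℝ) (hq : ContDiff ℝ 2 q) (hcon : Constrained α q)
    (f : Pt m k → ℝ) (hf : ContDiff ℝ 1 f)
    (ht : ∀ (Q : Fin (m+k) → ℝ) (v : Fin m → ℝ) (a a' : ℝ), f (Q, v, a) = f (Q, v, a'))
    (t : ℝ) :
    HasDerivAt (fun s => f (along m k q s))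
      (∑ r, vel m k q t r * pq f (Fin.castAdd k r) (along m k q t)
        + ∑ ν, α ν (along m k q t) * pq f (Fin.natAdd m ν) (along m k q t)
        + ∑ r, deriv (fun s => vel m k q s r) t * pv f r (along m k q t)) t := by
  have hX := along_hasDerivAt q hq t
  have hfd : DifferentiableAt ℝ f (along m k q t) := (hf.differentiable one_ne_zero) _
  have hcomp := hfd.hasFDerivAt.comp_hasDerivAt t hX
  have hval : (fderiv ℝ f (along m k q t))
      (qdot q t, (fun r => deriv (fun s => vel m k q s r) t), 1)
      = ∑ r, vel m k q t r * pq f (Fin.castAdd k r) (along m k q t)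
        + ∑ ν, α ν (along m k q t) * pq f (Fin.natAdd m ν) (along m k q t)
        + ∑ r, deriv (fun s => vel m k q s r) t * pv f r (along m k q t) := by
    rw [clm_decomp]
    rw [show (fderiv ℝ f (along m k q t)) ((0 : Fin (m+k) → ℝ), (0 : Fin m → ℝ), (1:ℝ)) = 0
      from pt_eq_zero f _ hfd ht, mul_zero, add_zero]
    rw [Fin.sum_univ_add (f := fun i => qdot q t i
      * (fderiv ℝ f (along m k q t)) ((Pi.single i 1 : Fin (m+k) → ℝ), 0, 0))]
    have h1 : ∀ r : Fin m, qdot q t (Fin.castAdd k r) = vel m k q t r := fun r => rfl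
    have h2 : ∀ ν : Fin k, qdot q t (Fin.natAdd m ν) = α ν (along m k q t) := hcon t
    simp only [h1, h2, pq, pv]
  rw [hval] at hcomp
  exact hcomp

theorem Jacobi_integral (m k : ℕ) (hm : 0 < m) (hk : 0 < k)
    (g : Fin (m+k) → Fin (m+k) → (Fin (m+k) → ℝ) → ℝ)
    (b : Fin (m+k) → (Fin (m+k) → ℝ) → ℝ)
    (c U : (Fin (m+k) → ℝ) → ℝ)
    (hg : ∀ i j, ContDiff ℝ 2 (g i j)) (hgsym : ∀ i j x, g i j x = g j i x)
    (hb : ∀ i, ContDiff ℝ 2 (b i)) (hc : ContDiff ℝ 2 c) (hU : ContDiff ℝ 2 U)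
    (L : PtL m k → ℝ)
    (hLdef : ∀ x : PtL m k,
      L x = (1/2) * ∑ i : Fin (m+k), ∑ j : Fin (m+k), g i j x.1 * x.2.1 i * x.2.1 j
        + ∑ i : Fin (m+k), b i x.1 * x.2.1 i + c x.1 + U x.1)
    (α : Fin k → Pt m k → ℝ) (hα : ∀ ν, ContDiff ℝ 2 (α ν))
    (hαt : ∀ (ν : Fin k) (x : Fin (m+k) → ℝ) (v : Fin m → ℝ) (t t' : ℝ),
      α ν (x, v, t) = α ν (x, v, t'))
    (habar : ∀ (ν : Fin k) (x : Pt m k), abar α ν x = α ν x)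
    (q : ℝ → Fin (m+k) → ℝ) (hq : ContDiff ℝ 2 q)
    (hcon : Constrained α q)
    (hV : Voronec L α q) :
    let J : ℝ → ℝ := fun t =>
      (1/2) * ∑ r : Fin m, ∑ s : Fin m,
          g (Fin.castAdd k r) (Fin.castAdd k s) (q t) * vel m k q t r * vel m k q t s
      + (1/2) * ∑ ν : Fin k, ∑ μ : Fin k,
          g (Fin.natAdd m ν) (Fin.natAdd m μ) (q t) * α ν (along m k q t) * α μ (along m k q t)
      + ∑ r : Fin m, ∑ ν : Fin k,
          g (Fin.castAdd k r) (Fin.natAdd m ν) (q t) * vel m k q t r * α ν (along m k q t)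
      - U (q t) - c (q t)
    ∀ t₁ t₂ : ℝ, J t₁ = J t₂ := by
  intro J t₁ t₂
  have hL2 : ContDiff ℝ 2 L := contDiff_L g b c U hg hb hc hU L hLdef
  have hLs : ContDiff ℝ 2 (Lstar L α) := hL2.comp (contDiff_Lpt α hα)
  have habarX : ∀ (ν : Fin k) (t : ℝ),
      ∑ r, vel m k q t r * pv (α ν) r (along m k q t) = α ν (along m k q t) :=
    fun ν t => habar ν (along m k q t)
  set JJ : ℝ → ℝ := fun t => ∑ r, vel m k q t r * pv (Lstar L α) r (along m k q t)
      - Lstar L α (along m k q t) with hJJ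
  -- Step 1: J agrees with the restricted energy JJ.
  have hJeq : ∀ t, J t = JJ t := by
    intro t
    show (1/2) * ∑ r : Fin m, ∑ s : Fin m,
          g (Fin.castAdd k r) (Fin.castAdd k s) (q t) * vel m k q t r * vel m k q t s
      + (1/2) * ∑ ν : Fin k, ∑ μ : Fin k,
          g (Fin.natAdd m ν) (Fin.natAdd m μ) (q t) * α ν (along m k q t) * α μ (along m k q t)
      + ∑ r : Fin m, ∑ ν : Fin k,
          g (Fin.castAdd k r) (Fin.natAdd m ν) (q t) * vel m k q t r * α ν (along m k q t)
      - U (q t) - c (q t) = JJ t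
    simp only [hJJ]
    have s1 : ∑ r, vel m k q t r * pv (Lstar L α) r (along m k q t)
        = ∑ i, uhat α (along m k q t) i * pv L i (Lpt α (along m k q t)) :=
      sum_v_pvLstar g b c U hg hgsym hb hc hU L hLdef α hα habar (along m k q t)
    have s2 : ∀ i, pv L i (Lpt α (along m k q t))
        = ∑ j, g i j (q t) * uhat α (along m k q t) j + b i (q t) :=
      fun i => pvL_eq g b c U hg hgsym hb hc hU L hLdef (Lpt α (along m k q t)) i
    have s3 : Lstar L α (along m k q t)
        = (1/2) * ∑ i, ∑ j, g i j (q t) * uhat α (along m k q t) i * uhat α (along m k q t) j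
          + ∑ i, b i (q t) * uhat α (along m k q t) i + c (q t) + U (q t) :=
      hLdef (Lpt α (along m k q t))
    have hu_ca : ∀ r, uhat α (along m k q t) (Fin.castAdd k r) = vel m k q t r :=
      fun r => Fin.append_left _ _ r
    have hu_na : ∀ ν, uhat α (along m k q t) (Fin.natAdd m ν) = α ν (along m k q t) :=
      fun ν => Fin.append_right _ _ ν
    rw [s1, s3]
    rw [show ∑ i, uhat α (along m k q t) i * pv L i (Lpt α (along m k q t))
        = ∑ i, uhat α (along m k q t) i
          * (∑ j, g i j (q t) * uhat α (along m k q t) j + b i (q t)) from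
      Finset.sum_congr rfl fun i _ => by rw [s2 i]]
    have e1 : ∑ i, uhat α (along m k q t) i
          * (∑ j, g i j (q t) * uhat α (along m k q t) j + b i (q t))
        = (∑ i, ∑ j, g i j (q t) * uhat α (along m k q t) i * uhat α (along m k q t) j)
          + ∑ i, b i (q t) * uhat α (along m k q t) i := by
      simp only [mul_add, Finset.sum_add_distrib, Finset.mul_sum]
      congr 1
      · exact Finset.sum_congr rfl fun i _ => Finset.sum_congr rfl fun j _ => by ring
      · exact Finset.sum_congr rfl fun i _ => by ring
    rw [e1]
    have hrow : ∀ i, ∑ j, g i j (q t) * uhat α (along m k q t) i * uhat α (along m k q t) j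
        = (∑ s, g i (Fin.castAdd k s) (q t) * uhat α (along m k q t) i * vel m k q t s)
          + ∑ μ, g i (Fin.natAdd m μ) (q t) * uhat α (along m k q t) i
              * α μ (along m k q t) := by
      intro i
      rw [Fin.sum_univ_add (f := fun j => g i j (q t) * uhat α (along m k q t) i
        * uhat α (along m k q t) j)]
      congr 1
      · exact Finset.sum_congr rfl fun s _ => by rw [hu_ca]
      · exact Finset.sum_congr rfl fun μ _ => by rw [hu_na]
    have hS : ∑ i, ∑ j, g i j (q t) * uhat α (along m k q t) i * uhat α (along m k q t) j
        = (∑ r, ∑ s, g (Fin.castAdd k r) (Fin.castAdd k s) (q t) * vel m k q t r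
            * vel m k q t s)
          + (∑ ν, ∑ μ, g (Fin.natAdd m ν) (Fin.natAdd m μ) (q t) * α ν (along m k q t)
            * α μ (along m k q t))
          + 2 * ∑ r, ∑ ν, g (Fin.castAdd k r) (Fin.natAdd m ν) (q t) * vel m k q t r
            * α ν (along m k q t) := by
      rw [Fin.sum_univ_add (f := fun i => ∑ j, g i j (q t) * uhat α (along m k q t) i
        * uhat α (along m k q t) j)]
      simp only [hrow]
      simp only [hu_ca, hu_na, Finset.sum_add_distrib]
      have hcross : ∑ ν, ∑ s, g (Fin.natAdd m ν) (Fin.castAdd k s) (q t)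
            * α ν (along m k q t) * vel m k q t s
          = ∑ r, ∑ ν, g (Fin.castAdd k r) (Fin.natAdd m ν) (q t) * vel m k q t r
            * α ν (along m k q t) := by
        rw [Finset.sum_comm]
        exact Finset.sum_congr rfl fun s _ => Finset.sum_congr rfl fun ν _ => by
          rw [hgsym]; ring
      rw [hcross]; ring
    rw [hS]; ring
  -- Step 2: JJ is constant.
  have hconst : ∀ t, HasDerivAt JJ 0 t := by
    intro t
    have hqc : ∀ i, ContDiff ℝ 2 fun s => q s i := fun i => contDiff_pi.mp hq i
    have hvelc : ∀ r, ContDiff ℝ 1 fun s => vel m k q s r := by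
      intro r
      have h2 : ContDiff ℝ ((1 : ℕ) + 1) (fun s => q s (Fin.castAdd k r)) := by
        exact_mod_cast hqc (Fin.castAdd k r)
      exact (contDiff_succ_iff_deriv.mp h2).2.2
    have hVr : ∀ r, HasDerivAt (fun s => vel m k q s r) (deriv (fun s => vel m k q s r) t) t :=
      fun r => (((hvelc r).differentiable one_ne_zero) t).hasDerivAt
    have hXd := (along_hasDerivAt q hq t).differentiableAt
    have hLst : ∀ (Q : Fin (m+k) → ℝ) (v : Fin m → ℝ) (a a' : ℝ),
        Lstar L α (Q, v, a) = Lstar L α (Q, v, a') := by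
      intro Q v a a'
      have hu : uhat α (Q, v, a) = uhat α (Q, v, a') := by
        funext i
        refine Fin.addCases (motive := fun i => uhat α (Q,v,a) i = uhat α (Q,v,a') i)
          (fun r => ?_) (fun ν => ?_) i
        · show uhat α (Q,v,a) (Fin.castAdd k r) = uhat α (Q,v,a') (Fin.castAdd k r)
          rw [show uhat α (Q,v,a) (Fin.castAdd k r) = v r from Fin.append_left _ _ r,
            show uhat α (Q,v,a') (Fin.castAdd k r) = v r from Fin.append_left _ _ r]
        · show uhat α (Q,v,a) (Fin.natAdd m ν) = uhat α (Q,v,a') (Fin.natAdd m ν)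
          rw [show uhat α (Q,v,a) (Fin.natAdd m ν) = α ν (Q,v,a) from Fin.append_right _ _ ν,
            show uhat α (Q,v,a') (Fin.natAdd m ν) = α ν (Q,v,a') from Fin.append_right _ _ ν]
          exact hαt ν Q v a a'
      show L (Lpt α (Q,v,a)) = L (Lpt α (Q,v,a'))
      rw [hLdef, hLdef]
      simp only [Lpt]
      rw [hu]
    have hPdiff : ∀ r, DifferentiableAt ℝ (fun s => pv (Lstar L α) r (along m k q s)) t := by
      intro r
      have h1 : ContDiff ℝ 1 (fun x : Pt m k => pv (Lstar L α) r x) := by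
        simp only [pv]; exact contDiff_fderiv_apply _ hLs _
      exact ((h1.differentiable one_ne_zero) _).comp t hXd
    have hRdiff : ∀ (ν : Fin k) (r : Fin m),
        DifferentiableAt ℝ (fun s => pv (α ν) r (along m k q s)) t := by
      intro ν r
      have h1 : ContDiff ℝ 1 (fun x : Pt m k => pv (α ν) r x) := by
        simp only [pv]; exact contDiff_fderiv_apply _ (hα ν) _
      exact ((h1.differentiable one_ne_zero) _).comp t hXd
    have hBsum : ∀ ν, ∑ r, vel m k q t r * Bco α q r ν t = 0 := by
      intro ν
      have h1 := chain_along α q hq hcon (α ν) ((hα ν).of_le (by norm_num))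
        (fun Q v a a' => hαt ν Q v a a') t
      have hfun : (fun s => α ν (along m k q s))
          = fun s => ∑ r, vel m k q s r * pv (α ν) r (along m k q s) := by
        funext s
        exact (habarX ν s).symm
      have h2 : HasDerivAt (fun s => α ν (along m k q s))
          (∑ r, (deriv (fun s => vel m k q s r) t * pv (α ν) r (along m k q t)
            + vel m k q t r * deriv (fun s => pv (α ν) r (along m k q s)) t)) t := by
        rw [hfun]
        exact HasDerivAt.fun_sum fun r _ => (hVr r).mul ((hRdiff ν r).hasDerivAt)
      have heq := h1.unique h2
      rw [Finset.sum_add_distrib] at heq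
      have hsum1 : ∑ r, vel m k q t r * deriv (fun s => pv (α ν) r (along m k q s)) t
          = ∑ r, vel m k q t r * pq (α ν) (Fin.castAdd k r) (along m k q t)
            + ∑ μ, α μ (along m k q t) * pq (α ν) (Fin.natAdd m μ) (along m k q t) := by
        linarith [heq]
      simp only [Bco, mul_sub, Finset.sum_sub_distrib]
      rw [hsum1]
      have hlast : ∑ r, vel m k q t r * ∑ μ, pv (α μ) r (along m k q t)
            * pq (α ν) (Fin.natAdd m μ) (along m k q t)
          = ∑ μ, α μ (along m k q t) * pq (α ν) (Fin.natAdd m μ) (along m k q t) := by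
        simp only [Finset.mul_sum]
        rw [Finset.sum_comm]
        refine Finset.sum_congr rfl fun μ _ => ?_
        rw [show ∑ r, vel m k q t r * (pv (α μ) r (along m k q t)
            * pq (α ν) (Fin.natAdd m μ) (along m k q t))
          = (∑ r, vel m k q t r * pv (α μ) r (along m k q t))
            * pq (α ν) (Fin.natAdd m μ) (along m k q t) from by
          rw [Finset.sum_mul]; exact Finset.sum_congr rfl fun r _ => by ring]
        rw [habarX μ t]
      rw [hlast]
      ring
    have hVor : ∀ r, deriv (fun s => pv (Lstar L α) r (along m k q s)) t
        = pq (Lstar L α) (Fin.castAdd k r) (along m k q t)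
          + ∑ ν, pq (Lstar L α) (Fin.natAdd m ν) (along m k q t) * pv (α ν) r (along m k q t)
          + ∑ ν, Bco α q r ν t * pv L (Fin.natAdd m ν) (Lpt α (along m k q t)) := by
      intro r
      have := hV r t
      linarith [this]
    have hdLs := chain_along α q hq hcon (Lstar L α) (hLs.of_le (by norm_num)) hLst t
    have hJd : HasDerivAt JJ
        (∑ r, (deriv (fun s => vel m k q s r) t * pv (Lstar L α) r (along m k q t)
            + vel m k q t r * deriv (fun s => pv (Lstar L α) r (along m k q s)) t)
          - (∑ r, vel m k q t r * pq (Lstar L α) (Fin.castAdd k r) (along m k q t)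
            + ∑ ν, α ν (along m k q t) * pq (Lstar L α) (Fin.natAdd m ν) (along m k q t)
            + ∑ r, deriv (fun s => vel m k q s r) t
                * pv (Lstar L α) r (along m k q t))) t := by
      rw [hJJ]
      exact (HasDerivAt.fun_sum fun r _ => (hVr r).mul ((hPdiff r).hasDerivAt)).sub hdLs
    have emid : ∑ r, vel m k q t r * ∑ ν, pq (Lstar L α) (Fin.natAdd m ν) (along m k q t)
          * pv (α ν) r (along m k q t)
        = ∑ ν, α ν (along m k q t) * pq (Lstar L α) (Fin.natAdd m ν) (along m k q t) := by
      simp only [Finset.mul_sum]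
      rw [Finset.sum_comm]
      refine Finset.sum_congr rfl fun ν _ => ?_
      rw [show ∑ r, vel m k q t r * (pq (Lstar L α) (Fin.natAdd m ν) (along m k q t)
          * pv (α ν) r (along m k q t))
        = (∑ r, vel m k q t r * pv (α ν) r (along m k q t))
          * pq (Lstar L α) (Fin.natAdd m ν) (along m k q t) from by
        rw [Finset.sum_mul]; exact Finset.sum_congr rfl fun r _ => by ring]
      rw [habarX ν t]
    have elast : ∑ r, vel m k q t r * ∑ ν, Bco α q r ν t
          * pv L (Fin.natAdd m ν) (Lpt α (along m k q t)) = 0 := by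
      simp only [Finset.mul_sum]
      rw [Finset.sum_comm]
      refine Finset.sum_eq_zero fun ν _ => ?_
      rw [show ∑ r, vel m k q t r * (Bco α q r ν t
          * pv L (Fin.natAdd m ν) (Lpt α (along m k q t)))
        = (∑ r, vel m k q t r * Bco α q r ν t)
          * pv L (Fin.natAdd m ν) (Lpt α (along m k q t)) from by
        rw [Finset.sum_mul]; exact Finset.sum_congr rfl fun r _ => by ring]
      rw [hBsum ν]; ring
    have e2 : ∑ r, vel m k q t r * deriv (fun s => pv (Lstar L α) r (along m k q s)) t
        = ∑ r, vel m k q t r * pq (Lstar L α) (Fin.castAdd k r) (along m k q t)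
          + ∑ ν, α ν (along m k q t) * pq (Lstar L α) (Fin.natAdd m ν) (along m k q t) := by
      calc ∑ r, vel m k q t r * deriv (fun s => pv (Lstar L α) r (along m k q s)) t
          = ∑ r, (vel m k q t r * pq (Lstar L α) (Fin.castAdd k r) (along m k q t)
              + (vel m k q t r * ∑ ν, pq (Lstar L α) (Fin.natAdd m ν) (along m k q t)
                  * pv (α ν) r (along m k q t)
                + vel m k q t r * ∑ ν, Bco α q r ν t
                  * pv L (Fin.natAdd m ν) (Lpt α (along m k q t)))) := by
            refine Finset.sum_congr rfl fun r _ => ?_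
            rw [hVor r]; ring
        _ = ∑ r, vel m k q t r * pq (Lstar L α) (Fin.castAdd k r) (along m k q t)
            + (∑ r, vel m k q t r * ∑ ν, pq (Lstar L α) (Fin.natAdd m ν) (along m k q t)
                * pv (α ν) r (along m k q t)
              + ∑ r, vel m k q t r * ∑ ν, Bco α q r ν t
                * pv L (Fin.natAdd m ν) (Lpt α (along m k q t))) := by
            rw [Finset.sum_add_distrib, Finset.sum_add_distrib]
        _ = _ := by rw [emid, elast]; ring
    convert hJd using 1
    rw [Finset.sum_add_distrib]
    linarith [e2]
  rw [hJeq t₁, hJeq t₂]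
  exact is_const_of_deriv_eq_zero (fun s => (hconst s).differentiableAt)
    (fun s => (hconst s).deriv) t₁ t₂


end NH
end
end
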